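/- Let a_1,...,a_n be positive integers (n ≥ 2), M their least common multiple, d_i = M/a_i, and b ≥ 0 an integer. The number P(b) of nonnegative integer solutions of a_1 x_1 + ... + a_n x_n = b equals ∑_{t_1=0}^{d_1−1} ⋯ ∑_{t_n=0}^{d_n−1} C(f(t_1,...,t_n)+1; n−1), where f(t_1,...,t_n) = (b − ∑_{i=1}^n a_i t_i)/M, and C(k, l) = k(k+1)···(k+l−1)/l! when k is a positive integer and b − ∑ a_i t_i is a nonnegative multiple of M, and C(k,l) = 0 otherwise. -/
import Mathlib

lemma myNatCardSigma {ι : Type*} [Fintype ι] (f : ι → Type*) [∀ i, Finite (f i)] :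
    Nat.card (Σ i, f i) = ∑ i, Nat.card (f i) := by
  haveI := fun i => Fintype.ofFinite (f i)
  simp [Nat.card_eq_fintype_card, Fintype.card_sigma]

lemma myStarsBars (n k : ℕ) :
    Nat.card {y : Fin n → ℕ // ∑ i, y i = k} = (k + n - 1).choose k := by
  rw [← Nat.card_congr (Sym.equivNatSumOfFintype (Fin n) k), Nat.card_eq_fintype_card,
    Sym.card_sym_eq_choose, Fintype.card_fin, Nat.add_comm]

theorem stmt2 (n : ℕ) (hn : 2 ≤ n) (a : Fin n → ℕ) (ha : ∀ i, 0 < a i) (M : ℕ)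
    (hM : M = Finset.univ.lcm a) (b : ℕ) :
    Nat.card {x : Fin n → ℕ // ∑ i, a i * x i = b} =
      ∑ t : (i : Fin n) → Fin (M / a i),
        if (∑ i, a i * (t i : ℕ)) ≤ b ∧ M ∣ (b - ∑ i, a i * (t i : ℕ)) then
          Nat.choose ((b - ∑ i, a i * (t i : ℕ)) / M + n - 1) (n - 1)
        else 0 := by
  have hdvd : ∀ i, a i ∣ M := fun i => hM ▸ Finset.dvd_lcm (Finset.mem_univ i)
  have hMpos : 0 < M := by
    rw [hM]
    apply Nat.pos_of_ne_zero
    intro h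
    rw [Finset.lcm_eq_zero_iff] at h
    obtain ⟨i, -, hi⟩ := h
    exact (ha i).ne' hi
  set d : Fin n → ℕ := fun i => M / a i with hd
  have hmul : ∀ i, a i * d i = M := fun i => Nat.mul_div_cancel' (hdvd i)
  have hdpos : ∀ i, 0 < d i := fun i => by
    have := hmul i; by_contra h; simp [Nat.eq_zero_of_not_pos h] at this; omega
  -- the fiber type
  set F : ((i : Fin n) → Fin (d i)) → Type := fun t =>
    {y : Fin n → ℕ // (∑ i, a i * (t i : ℕ)) + M * ∑ i, y i = b} with hF
  -- key decomposition of the sum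
  have key : ∀ x : Fin n → ℕ,
      ∑ i, a i * x i = (∑ i, a i * (x i % d i)) + M * ∑ i, x i / d i := by
    intro x
    rw [Finset.mul_sum, ← Finset.sum_add_distrib]
    refine Finset.sum_congr rfl fun i _ => ?_
    rw [← hmul i, Nat.mul_assoc, ← Nat.mul_add, Nat.mod_add_div]
  have sig_ext : ∀ p q : Σ t, F t, p.1 = q.1 → p.2.1 = q.2.1 → p = q := by
    rintro ⟨t, y⟩ ⟨t', y'⟩ h1 h2
    dsimp at h1
    subst h1
    exact congrArg (Sigma.mk t) (Subtype.ext h2)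
  -- equivalence with the sigma type
  have e : {x : Fin n → ℕ // ∑ i, a i * x i = b} ≃ Σ t, F t :=
    { toFun := fun x => ⟨fun i => ⟨x.1 i % d i, Nat.mod_lt _ (hdpos i)⟩,
        fun i => x.1 i / d i, by simpa using (key x.1).symm.trans x.2⟩
      invFun := fun p => ⟨fun i => (p.1 i : ℕ) + d i * p.2.1 i, by
        show ∑ i, a i * ((p.1 i : ℕ) + d i * p.2.1 i) = b
        have h2 : ∑ i, a i * ((p.1 i : ℕ) + d i * p.2.1 i)
            = (∑ i, a i * (p.1 i : ℕ)) + M * ∑ i, p.2.1 i := by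
          rw [Finset.mul_sum, ← Finset.sum_add_distrib]
          refine Finset.sum_congr rfl fun i _ => ?_
          rw [Nat.mul_add, ← Nat.mul_assoc, hmul i]
        exact h2.trans p.2.2⟩
      left_inv := fun x => by
        ext i
        simp [Nat.mod_add_div]
      right_inv := fun p => by
        refine sig_ext _ _ (funext fun i => ?_) (funext fun i => ?_)
        · ext
          simp [Nat.add_mul_mod_self_left, Nat.mod_eq_of_lt (p.1 i).2]
        · show ((p.1 i : ℕ) + d i * p.2.1 i) / d i = p.2.1 i
          rw [Nat.add_mul_div_left _ _ (hdpos i), Nat.div_eq_of_lt (p.1 i).2, Nat.zero_add] }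
  rw [Nat.card_congr e]
  have hfin : ∀ t, Finite (F t) := by
    intro t
    by_cases hc : (∑ i, a i * (t i : ℕ)) ≤ b ∧ M ∣ (b - ∑ i, a i * (t i : ℕ))
    · have e2 : F t ≃ {y : Fin n → ℕ // ∑ i, y i = (b - ∑ i, a i * (t i : ℕ)) / M} := by
        refine Equiv.subtypeEquivRight fun y => ?_
        constructor
        · intro h
          have h1 : M * ∑ i, y i = b - ∑ i, a i * (t i : ℕ) := by omega
          rw [← h1, Nat.mul_div_cancel_left _ hMpos]
        · intro h
          rw [h, Nat.mul_div_cancel' hc.2]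
          omega
      haveI : Finite {y : Fin n → ℕ // ∑ i, y i = (b - ∑ i, a i * (t i : ℕ)) / M} :=
        Finite.of_equiv _ (Sym.equivNatSumOfFintype (Fin n) _)
      exact Finite.of_equiv _ e2.symm
    · haveI : IsEmpty (F t) := ⟨fun y => hc ⟨by have := y.2; omega, ⟨∑ i, y.1 i, by have := y.2; omega⟩⟩⟩
      infer_instance
  haveI := hfin
  rw [myNatCardSigma]
  refine Finset.sum_congr rfl fun t _ => ?_
  by_cases hc : (∑ i, a i * (t i : ℕ)) ≤ b ∧ M ∣ (b - ∑ i, a i * (t i : ℕ))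
  · rw [if_pos hc]
    set k := (b - ∑ i, a i * (t i : ℕ)) / M with hk
    have e2 : F t ≃ {y : Fin n → ℕ // ∑ i, y i = k} := by
      refine Equiv.subtypeEquivRight fun y => ?_
      constructor
      · intro h
        have h1 : M * ∑ i, y i = b - ∑ i, a i * (t i : ℕ) := by omega
        rw [hk, ← h1, Nat.mul_div_cancel_left _ hMpos]
      · intro h
        have := Nat.mul_div_cancel' hc.2
        rw [h, hk]
        omega
    haveI : Finite {y : Fin n → ℕ // ∑ i, y i = k} :=
      Finite.of_equiv _ (Sym.equivNatSumOfFintype (Fin n) _)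
    rw [Nat.card_congr e2, myStarsBars]
    rw [← Nat.choose_symm (show k ≤ k + n - 1 by omega)]
    congr 1
    omega
  · rw [if_neg hc]
    have : IsEmpty (F t) := by
      constructor
      rintro ⟨y, hy⟩
      exact hc ⟨by omega, ⟨∑ i, y i, by omega⟩⟩
    simp [Nat.card_eq_zero, this]
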